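/- Let S = ℤ_p with its p-adic topology and let f ∈ C(S, ℤ_p) be the identity function f(s) = s. Then f is a non-zero-divisor in C(S, ℤ_p), but the principal ideal (f) is not closed in the p-adic topology on C(S, ℤ_p); for instance, the function s ↦ (−1)^{v_p(s)}·s (with value 0 at s = 0) lies in the closure of (f) but not in (f). -/

import Mathlib

open PadicInt Filter Topology

section Aux

variable {p : ℕ} [Fact p.Prime]

private lemma sgn_norm' (m : ℕ) (x : ℤ_[p]) : ‖((-1:ℤ_[p]))^m * x‖ = ‖x‖ := by
  rw [norm_mul, norm_pow, norm_neg, norm_one, one_pow, one_mul]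

private lemma val_toNat_eq_of_norm_eq' {s t : ℤ_[p]} (h : ‖s‖ = ‖t‖) :
    s.valuation = t.valuation := by
  by_cases hs : s = 0
  · have : t = 0 := by rw [← norm_eq_zero]; rw [← h, hs, norm_zero]
    rw [hs, this]
  have ht : t ≠ 0 := by
    intro h0; apply hs; rw [← norm_eq_zero, h, h0, norm_zero]
  have h1 : s.valuation ≤ t.valuation := by
    have := (norm_le_pow_iff_le_valuation t ht s.valuation).mp (by
      rw [← h, norm_eq_zpow_neg_valuation hs])
    omega
  have h2 : t.valuation ≤ s.valuation := by
    have := (norm_le_pow_iff_le_valuation s hs t.valuation).mp (by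
      rw [h, norm_eq_zpow_neg_valuation ht])
    omega
  omega

private lemma key_lip' (k : ℕ → ℕ) (s t : ℤ_[p]) :
    ‖(-1:ℤ_[p])^(k s.valuation) * s - (-1)^(k t.valuation) * t‖ ≤ ‖s - t‖ := by
  by_cases h : s.valuation = t.valuation
  · rw [h, ← mul_sub, sgn_norm']
  · have hne : ‖s‖ ≠ ‖t‖ := fun he => h (val_toNat_eq_of_norm_eq' he)
    calc ‖(-1:ℤ_[p])^(k s.valuation) * s - (-1)^(k t.valuation) * t‖
        ≤ max ‖(-1:ℤ_[p])^(k s.valuation) * s‖ ‖-((-1:ℤ_[p])^(k t.valuation) * t)‖ := by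
          rw [sub_eq_add_neg]; exact nonarchimedean _ _
      _ = max ‖s‖ ‖t‖ := by rw [norm_neg, sgn_norm', sgn_norm']
      _ = ‖s - t‖ := by
          rw [sub_eq_add_neg, norm_add_eq_max_of_ne (by rwa [norm_neg]), norm_neg]

/-- The continuous map `s ↦ (-1)^(k (v_p s)) * s`. -/
private noncomputable def Gk (p : ℕ) [Fact p.Prime] (k : ℕ → ℕ) : C(ℤ_[p], ℤ_[p]) :=
  ⟨fun s => (-1)^(k s.valuation) * s,
    (LipschitzWith.of_dist_le_mul (K := 1) (fun s t => by
      rw [dist_eq_norm, dist_eq_norm, NNReal.coe_one, one_mul]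
      exact key_lip' k s t)).continuous⟩

private lemma pk_ne_zero' (k : ℕ) : ((p : ℤ_[p]))^k ≠ 0 :=
  pow_ne_zero _ (Nat.cast_ne_zero.mpr (Fact.out (p := p.Prime)).ne_zero)

private lemma pk_tendsto' : Tendsto (fun k : ℕ => ((p:ℤ_[p]))^k) atTop (𝓝 0) := by
  apply tendsto_pow_atTop_nhds_zero_of_norm_lt_one
  rw [norm_p]
  have : (1:ℝ) < p := by exact_mod_cast (Fact.out (p := p.Prime)).one_lt
  rw [inv_lt_one_iff₀]; right; exact this

private lemma val_pk' (k : ℕ) : ((p : ℤ_[p])^k).valuation = k := by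
  have := valuation_p_pow_mul (p := p) k 1 one_ne_zero
  simpa using this

private lemma norm_eq_of_dist_lt' {s t : ℤ_[p]} (h : ‖t - s‖ < ‖s‖) : ‖t‖ = ‖s‖ := by
  by_contra hne
  have h2 : ‖t + (-s)‖ = max ‖t‖ ‖-s‖ :=
    norm_add_eq_max_of_ne (by rw [norm_neg]; exact hne)
  rw [← sub_eq_add_neg, norm_neg] at h2
  have := le_max_right ‖t‖ ‖s‖
  rw [← h2] at this
  exact absurd h (not_lt.mpr this)

open scoped Classical in
private lemma cn_cont' (n : ℕ) :
    Continuous (fun s : ℤ_[p] =>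
      if s = 0 then ((-1:ℤ_[p]))^n else (-1)^(min s.valuation n)) := by
  apply IsLocallyConstant.continuous
  rw [IsLocallyConstant.iff_exists_open]
  intro s
  by_cases hs : s = 0
  · subst hs
    refine ⟨Metric.ball 0 ((p:ℝ)^(-(n:ℤ))), Metric.isOpen_ball, ?_, ?_⟩
    · simp only [Metric.mem_ball, dist_zero_right, norm_zero]
      apply zpow_pos
      exact_mod_cast (Fact.out (p := p.Prime)).pos
    · intro t ht
      simp only [Metric.mem_ball, dist_zero_right] at ht
      by_cases ht0 : t = 0
      · simp [ht0]
      · have h1 : ‖t‖ ≤ (p:ℝ) ^ (-((n+1:ℕ)) : ℤ) := by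
          rw [norm_le_pow_iff_norm_lt_pow_add_one]
          convert ht using 2
          push_cast
          ring
        have h2 := (norm_le_pow_iff_le_valuation t ht0 (n+1)).mp h1
        have h3 : n + 1 ≤ t.valuation := by omega
        rw [if_neg ht0, if_pos rfl]
        congr 1
        omega
  · refine ⟨Metric.ball s ‖s‖, Metric.isOpen_ball, ?_, ?_⟩
    · rw [Metric.mem_ball, dist_self]
      exact norm_pos_iff.mpr hs
    · intro t ht
      rw [Metric.mem_ball, dist_eq_norm] at ht
      have hnorm : ‖t‖ = ‖s‖ := norm_eq_of_dist_lt' ht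
      have ht0 : t ≠ 0 := by
        intro h0
        rw [h0, norm_zero] at hnorm
        exact hs (by rwa [eq_comm, norm_eq_zero] at hnorm)
      have hval := val_toNat_eq_of_norm_eq' hnorm
      rw [if_neg ht0, if_neg hs, hval]

end Aux

/-- Let `S = ℤ_p` and let `f ∈ C(ℤ_p, ℤ_p)` be the identity function.  Then `f` is a
non-zero-divisor in `C(ℤ_p, ℤ_p)`, but the principal ideal `(f)` is not closed for the
`p`-adic (sup-norm) topology: the continuous function `s ↦ (-1)^{v_p(s)}·s` lies in the
closure of `(f)` but not in `(f)`. -/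
theorem ideal_of_identity_not_closed (p : ℕ) [Fact p.Prime] :
    (ContinuousMap.id ℤ_[p]) ∈ nonZeroDivisors C(ℤ_[p], ℤ_[p]) ∧
    ∃ g : C(ℤ_[p], ℤ_[p]),
      (∀ s : ℤ_[p], g s = (-1) ^ (s.valuation) * s) ∧
      g ∈ closure (Ideal.span {ContinuousMap.id ℤ_[p]} : Set C(ℤ_[p], ℤ_[p])) ∧
      g ∉ Ideal.span {ContinuousMap.id ℤ_[p]} := by
  classical
  have hp1 : (1:ℝ) < p := by exact_mod_cast (Fact.out (p := p.Prime)).one_lt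
  refine ⟨?_, Gk p id, fun s => rfl, ?_, ?_⟩
  · -- non-zero-divisor
    rw [mem_nonZeroDivisors_iff_right]
    intro x hx
    ext s
    have hev : ∀ t : ℤ_[p], x t * t = 0 := by
      intro t
      have := ContinuousMap.congr_fun hx t
      simpa using this
    have hz : ∀ t : ℤ_[p], t ≠ 0 → x t = 0 := by
      intro t ht
      rcases mul_eq_zero.mp (hev t) with h | h
      · exact h
      · exact absurd h ht
    by_cases hs : s = 0
    · subst hs
      have h1 : Tendsto (fun k : ℕ => x ((p:ℤ_[p])^k)) atTop (𝓝 (x 0)) :=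
        (x.continuous.tendsto 0).comp pk_tendsto'
      have h2 : (fun k : ℕ => x ((p:ℤ_[p])^k)) = fun _ => 0 := by
        funext k; exact hz _ (pk_ne_zero' k)
      rw [h2] at h1
      simpa using (tendsto_nhds_unique h1 tendsto_const_nhds)
    · simpa using hz s hs
  · -- in the closure
    rw [Metric.mem_closure_iff]
    intro ε hε
    obtain ⟨n, hn⟩ := exists_pow_lt_of_lt_one hε
      (show (p:ℝ)⁻¹ < 1 by rw [inv_lt_one_iff₀]; right; exact hp1)
    refine ⟨Gk p (fun m => min m n), ?_, ?_⟩
    · -- belongs to the ideal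
      rw [SetLike.mem_coe, Ideal.mem_span_singleton]
      refine ⟨⟨fun s => if s = 0 then ((-1:ℤ_[p]))^n else (-1)^(min s.valuation n),
        cn_cont' n⟩, ?_⟩
      ext s
      by_cases hs : s = 0
      · simp [Gk, hs]
      · simp only [Gk, ContinuousMap.coe_mk, ContinuousMap.mul_apply,
          ContinuousMap.id_apply, if_neg hs]
        ring
    · rw [ContinuousMap.dist_lt_iff hε]
      intro s
      simp only [Gk, ContinuousMap.coe_mk, id_eq]
      rw [dist_eq_norm]
      by_cases hv : s.valuation ≤ n
      · rw [min_eq_left hv, sub_self, norm_zero]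
        exact hε
      · push_neg at hv
        have hs : s ≠ 0 := by
          intro h0
          rw [h0, valuation_zero] at hv
          simp at hv
        have hle : ‖(-1:ℤ_[p])^(s.valuation) * s - (-1)^(min s.valuation n) * s‖
            ≤ ‖s‖ := by
          rw [← sub_mul, norm_mul]
          calc ‖(-1:ℤ_[p])^(s.valuation) - (-1)^(min s.valuation n)‖ * ‖s‖
              ≤ 1 * ‖s‖ := by
                apply mul_le_mul_of_nonneg_right (PadicInt.norm_le_one _) (norm_nonneg _)
            _ = ‖s‖ := one_mul _
        have hsle : ‖s‖ ≤ (p:ℝ) ^ (-(n+1:ℕ) : ℤ) :=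
          (norm_le_pow_iff_le_valuation s hs (n+1)).mpr (by omega)
        have hlt : (p:ℝ) ^ (-(n+1:ℕ) : ℤ) < (p:ℝ)⁻¹ ^ n := by
          have : (p:ℝ)⁻¹ ^ n = (p:ℝ) ^ (-(n:ℕ) : ℤ) := by
            rw [zpow_neg, zpow_natCast, inv_pow]
          rw [this]
          apply zpow_lt_zpow_right₀ hp1
          push_cast
          omega
        calc ‖(-1:ℤ_[p])^(s.valuation) * s - (-1)^(min s.valuation n) * s‖
            ≤ ‖s‖ := hle
          _ ≤ (p:ℝ) ^ (-(n+1:ℕ) : ℤ) := hsle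
          _ < (p:ℝ)⁻¹ ^ n := hlt
          _ < ε := hn
  · -- not in the ideal
    intro hmem
    rw [Ideal.mem_span_singleton] at hmem
    obtain ⟨c, hc⟩ := hmem
    have hck : ∀ k : ℕ, c ((p:ℤ_[p])^k) = (-1)^k := by
      intro k
      have := ContinuousMap.congr_fun hc ((p:ℤ_[p])^k)
      simp only [Gk, ContinuousMap.coe_mk, ContinuousMap.mul_apply,
        ContinuousMap.id_apply, id_eq] at this
      rw [val_pk'] at this
      have hne := pk_ne_zero' (p := p) k
      have h2 : (p:ℤ_[p])^k * (-1)^k = (p:ℤ_[p])^k * c ((p:ℤ_[p])^k) := by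
        rw [← this, mul_comm]
      exact (mul_left_cancel₀ hne h2).symm
    have htend : Tendsto (fun k : ℕ => c ((p:ℤ_[p])^k)) atTop (𝓝 (c 0)) :=
      (c.continuous.tendsto 0).comp pk_tendsto'
    have h2k : Tendsto (fun k : ℕ => 2*k) atTop atTop :=
      (StrictMono.tendsto_atTop (fun a b hab => by omega))
    have h2k1 : Tendsto (fun k : ℕ => 2*k+1) atTop atTop :=
      (StrictMono.tendsto_atTop (fun a b hab => by omega))
    have heven : Tendsto (fun k : ℕ => c ((p:ℤ_[p])^(2*k))) atTop (𝓝 (c 0)) :=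
      htend.comp h2k
    have hodd : Tendsto (fun k : ℕ => c ((p:ℤ_[p])^(2*k+1))) atTop (𝓝 (c 0)) :=
      htend.comp h2k1
    have he1 : (fun k : ℕ => c ((p:ℤ_[p])^(2*k))) = fun _ => 1 := by
      funext k; rw [hck, pow_mul]; norm_num
    have ho1 : (fun k : ℕ => c ((p:ℤ_[p])^(2*k+1))) = fun _ => -1 := by
      funext k; rw [hck, pow_add, pow_mul]; norm_num
    rw [he1] at heven
    rw [ho1] at hodd
    have e1 : c 0 = 1 := tendsto_nhds_unique heven tendsto_const_nhds
    have e2 : c 0 = -1 := tendsto_nhds_unique hodd tendsto_const_nhds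
    rw [e1] at e2
    norm_num at e2
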